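/- For any f₀ ∈ ℝ, the functions λ(t) = 1 − t/2, h(t) = (2 − t)^{−1/2}, f(t) = f₀ (1 − t/2)^{−1/2} solve the cylinder soliton ODE system on [0, 2): λ(t) > 0, λ'(t) = −1 + λ(t)h(t)², h'(t) = h(t)/λ(t) − (3/2)h(t)³, and f'(t) = (1/2)h(t)²f(t) for all t ∈ [0, 2). In particular λ(0) = 1 and h(0)² = 1/2. -/

import Mathlib

/-- For any `f₀`, the functions `λ(t) = 1 - t/2`, `h(t) = (2 - t)^{-1/2}`,
`f(t) = f₀ (1 - t/2)^{-1/2}` solve the cylinder soliton ODE system on `[0, 2)`;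
moreover `λ(0) = 1` and `h(0)² = 1/2`. -/
theorem stmt_11 (f₀ : ℝ) (lam h f : ℝ → ℝ)
    (hlam : lam = fun t => 1 - t / 2)
    (hh : h = fun t => (2 - t) ^ (-(1 : ℝ) / 2))
    (hf : f = fun t => f₀ * (1 - t / 2) ^ (-(1 : ℝ) / 2)) :
    (∀ t ∈ Set.Ico (0 : ℝ) 2,
      0 < lam t ∧
      HasDerivAt lam (-1 + lam t * (h t) ^ 2) t ∧
      HasDerivAt h (h t / lam t - (3 / 2) * (h t) ^ 3) t ∧
      HasDerivAt f ((1 / 2) * (h t) ^ 2 * f t) t) ∧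
    lam 0 = 1 ∧ (h 0) ^ 2 = 1 / 2 := by
  subst hlam hh hf
  refine ⟨fun t ht => ?_, by norm_num, ?_⟩
  · obtain ⟨ht0, ht2⟩ := ht
    have hA : (0:ℝ) < 2 - t := by linarith
    have hB : (0:ℝ) < 1 - t / 2 := by linarith
    have hAne : (2 - t) ≠ 0 := ne_of_gt hA
    have hBne : (1 - t / 2) ≠ 0 := ne_of_gt hB
    -- key rpow identities
    have hsq : ((2 - t) ^ (-(1:ℝ)/2)) ^ 2 = (2 - t)⁻¹ := by
      rw [← Real.rpow_natCast ((2 - t) ^ (-(1:ℝ)/2)) 2, ← Real.rpow_mul hA.le]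
      norm_num
      rw [Real.rpow_neg_one]
    have hcube : ((2 - t) ^ (-(1:ℝ)/2)) ^ 3 = (2 - t) ^ (-(3:ℝ)/2) := by
      rw [← Real.rpow_natCast ((2 - t) ^ (-(1:ℝ)/2)) 3, ← Real.rpow_mul hA.le]
      norm_num
    have hhalf : (2 - t) ^ (-(1:ℝ)/2) = (2 - t) * (2 - t) ^ (-(3:ℝ)/2) := by
      rw [← Real.rpow_one_add' hA.le (by norm_num : (1:ℝ) + -(3:ℝ)/2 ≠ 0)]
      norm_num
    refine ⟨hB, ?_, ?_, ?_⟩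
    · have : HasDerivAt (fun t : ℝ => 1 - t / 2) (-(1/2)) t := by
        simpa using ((hasDerivAt_id t).div_const 2).const_sub 1
      convert this using 1
      simp only []
      rw [hsq]
      field_simp
      ring
    · have hinner : HasDerivAt (fun t : ℝ => 2 - t) (-1) t := by
        simpa using (hasDerivAt_id t).const_sub 2
      have houter := Real.hasDerivAt_rpow_const (p := -(1:ℝ)/2) (Or.inl hAne)
      have := (houter.comp t hinner)
      convert this using 1
      rfl
      rfl
      rfl
      beta_reduce
      rw [hcube, hhalf]
      have : -(1:ℝ)/2 - 1 = -(3:ℝ)/2 := by norm_num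
      rw [this]
      field_simp
      ring
    · have hinner : HasDerivAt (fun t : ℝ => 1 - t / 2) (-(1/2)) t := by
        simpa using ((hasDerivAt_id t).div_const 2).const_sub 1
      have houter := Real.hasDerivAt_rpow_const (p := -(1:ℝ)/2) (Or.inl hBne)
      have hd := ((houter.comp t hinner).const_mul f₀)
      convert hd using 1
      rfl
      rfl
      rfl
      have h32 : (1 - t/2) ^ (-(1:ℝ)/2 - 1) = (1 - t/2)⁻¹ * (1 - t/2) ^ (-(1:ℝ)/2) := by
        rw [← Real.rpow_neg_one (1 - t/2), ← Real.rpow_add hB]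
        ring_nf
      rw [hsq, h32]
      have h2B : (2 - t) = 2 * (1 - t/2) := by ring
      rw [h2B]
      field_simp
  · simp only []
    rw [show ((2:ℝ) - 0) = 2 by norm_num,
      ← Real.rpow_natCast ((2:ℝ) ^ (-(1:ℝ)/2)) 2, ← Real.rpow_mul (by norm_num)]
    norm_num
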